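/- arXiv:1609.03600 — 2 statements merged into one kernel-verified Lean document; each statement's English description precedes it below -/
import Mathlib

section
/- Let ā, p̄, q̲ > 0 be constants. Let P' ∈ ℝ^{n×n} be symmetric positive definite with P' ⪯ p̄ I, let Ā ∈ ℝ^{n×n} satisfy ‖Ā‖ ≤ ā, let Q ∈ ℝ^{n×n} be symmetric with q̲ I ⪯ Q, let R ∈ ℝ^{m×m} be symmetric positive semidefinite, and let L ∈ ℝ^{n×m}, C ∈ ℝ^{m×n}. Define P = (I − LC) Ā P' Āᵀ (I − LC)ᵀ + (I − LC) Q (I − LC)ᵀ + L R Lᵀ and suppose P is positive definite. Then, with α' = (1 + q̲/(2 ā² p̄))⁻¹ ∈ (0,1), it holds that Āᵀ (I − LC)ᵀ P⁻¹ (I − LC) Ā ⪯ α' (P')⁻¹. -/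
open Matrix

/-- The operator norm of a real matrix induced by the Euclidean vector norm. -/
noncomputable def opNorm {m n : ℕ} (A : Matrix (Fin m) (Fin n) ℝ) : ℝ :=
  ‖LinearMap.toContinuousLinearMap (Matrix.toEuclideanLin A)‖


/-- Cauchy–Schwarz for dot products. -/
lemma dot_sq_le {k : ℕ} (u v : Fin k → ℝ) :
    (u ⬝ᵥ v) ^ 2 ≤ (u ⬝ᵥ u) * (v ⬝ᵥ v) := by
  simpa [dotProduct, sq] using Finset.sum_mul_sq_le_sq_mul_sq Finset.univ u v

lemma symm_dot {k : ℕ} {S : Matrix (Fin k) (Fin k) ℝ} (hS : S.IsHermitian)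
    (u w : Fin k → ℝ) : u ⬝ᵥ (S *ᵥ w) = (S *ᵥ u) ⬝ᵥ w := by
  have : Sᵀ = S := by
    have := hS.eq
    rwa [conjTranspose_eq_transpose_of_trivial] at this
  rw [dotProduct_mulVec, ← mulVec_transpose, this]

/-- Weighted Cauchy–Schwarz for a PSD matrix. -/
lemma weighted_cs {k : ℕ} {M : Matrix (Fin k) (Fin k) ℝ} (hM : M.PosSemidef)
    (u v : Fin k → ℝ) :
    (u ⬝ᵥ (M *ᵥ v)) ^ 2 ≤ (u ⬝ᵥ (M *ᵥ u)) * (v ⬝ᵥ (M *ᵥ v)) := by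
  obtain ⟨S, hs, hmm⟩ : ∃ S : Matrix (Fin k) (Fin k) ℝ, S.IsHermitian ∧ S * S = M := by
    open scoped MatrixOrder in
    exact ⟨CFC.sqrt M, (CFC.sqrt_nonneg M).posSemidef.isHermitian,
      CFC.sqrt_mul_sqrt_self M hM.nonneg⟩
  have key : ∀ a b : Fin k → ℝ, a ⬝ᵥ (M *ᵥ b) = (S *ᵥ a) ⬝ᵥ (S *ᵥ b) := by
    intro a b
    have h2 : M *ᵥ b = S *ᵥ (S *ᵥ b) := by rw [mulVec_mulVec, hmm]
    rw [h2, symm_dot hs]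
  rw [key u v, key u u, key v v]
  exact dot_sq_le _ _

lemma dot_self_nonneg {k : ℕ} (v : Fin k → ℝ) : 0 ≤ v ⬝ᵥ v :=
  Finset.sum_nonneg fun i _ => mul_self_nonneg _

lemma norm_symm_sq {k : ℕ} (v : Fin k → ℝ) :
    ‖(WithLp.equiv 2 (Fin k → ℝ)).symm v‖ ^ 2 = v ⬝ᵥ v := by
  rw [EuclideanSpace.norm_eq, Real.sq_sqrt (by positivity)]
  simp [dotProduct, sq]

lemma mulVec_dot_le {k l : ℕ} (A : Matrix (Fin k) (Fin l) ℝ) (x : Fin l → ℝ) :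
    (A *ᵥ x) ⬝ᵥ (A *ᵥ x) ≤ opNorm A ^ 2 * (x ⬝ᵥ x) := by
  have h := (LinearMap.toContinuousLinearMap (Matrix.toEuclideanLin A)).le_opNorm
      ((WithLp.equiv 2 (Fin l → ℝ)).symm x)
  rw [LinearMap.coe_toContinuousLinearMap'] at h
  change ‖(WithLp.equiv 2 (Fin k → ℝ)).symm (A *ᵥ x)‖ ≤ _ at h
  have h2 := mul_self_le_mul_self (norm_nonneg _) h
  rw [← sq, ← sq, mul_pow, norm_symm_sq, norm_symm_sq] at h2
  exact h2

lemma transpose_mulVec_dot_le {k l : ℕ} (A : Matrix (Fin k) (Fin l) ℝ) (x : Fin k → ℝ) :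
    (Aᵀ *ᵥ x) ⬝ᵥ (Aᵀ *ᵥ x) ≤ opNorm A ^ 2 * (x ⬝ᵥ x) := by
  set u := Aᵀ *ᵥ x with hu
  have h1 : u ⬝ᵥ u = x ⬝ᵥ (A *ᵥ u) := by
    rw [dotProduct_mulVec, ← mulVec_transpose, transpose_transpose, dotProduct_comm]
  have h2 : (x ⬝ᵥ (A *ᵥ u)) ^ 2 ≤ (x ⬝ᵥ x) * ((A *ᵥ u) ⬝ᵥ (A *ᵥ u)) := dot_sq_le _ _
  have h3 := mulVec_dot_le A u
  have hx := dot_self_nonneg x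
  have ht := dot_self_nonneg u
  have hop : (0:ℝ) ≤ opNorm A ^ 2 := by positivity
  have h4 : (u ⬝ᵥ u) ^ 2 ≤ (opNorm A ^ 2 * (x ⬝ᵥ x)) * (u ⬝ᵥ u) := by
    calc (u ⬝ᵥ u) ^ 2 = (x ⬝ᵥ (A *ᵥ u)) ^ 2 := by rw [h1]
      _ ≤ (x ⬝ᵥ x) * ((A *ᵥ u) ⬝ᵥ (A *ᵥ u)) := h2
      _ ≤ (x ⬝ᵥ x) * (opNorm A ^ 2 * (u ⬝ᵥ u)) := by nlinarith
      _ = (opNorm A ^ 2 * (x ⬝ᵥ x)) * (u ⬝ᵥ u) := by ring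
  rcases eq_or_lt_of_le ht with h0 | h0
  · rw [← h0]; positivity
  · rw [sq] at h4
    exact le_of_mul_le_mul_right h4 h0

lemma contraction {k : ℕ} {c : ℝ} (hc : 0 < c)
    {P P' F : Matrix (Fin k) (Fin k) ℝ} (hP : P.PosDef) (hP' : P'.PosDef)
    (h : (P - c • (F * P' * Fᵀ)).PosSemidef) :
    (c⁻¹ • P'⁻¹ - Fᵀ * P⁻¹ * F).PosSemidef := by
  have hPinv := hP.inv
  have hP'inv := hP'.inv
  have hFPF : (Fᵀ * P⁻¹ * F).PosSemidef := by
    have := hPinv.posSemidef.conjTranspose_mul_mul_same F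
    rwa [conjTranspose_eq_transpose_of_trivial] at this
  refine Matrix.PosSemidef.of_dotProduct_mulVec_nonneg ?_ ?_
  · have h1 : (c⁻¹ • P'⁻¹ : Matrix (Fin k) (Fin k) ℝ).IsHermitian := by
      have ht' : P'⁻¹ᵀ = P'⁻¹ := by
        rw [← conjTranspose_eq_transpose_of_trivial]; exact hP'inv.isHermitian
      simp [Matrix.IsHermitian, conjTranspose_smul, ht']
    exact h1.sub hFPF.isHermitian
  intro x
  have hPP : P * P⁻¹ = 1 := Matrix.mul_nonsing_inv P hP.det_pos.ne'.isUnit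
  have hP'P' : P' * P'⁻¹ = 1 := Matrix.mul_nonsing_inv P' hP'.det_pos.ne'.isUnit
  set y := P⁻¹ *ᵥ (F *ᵥ x) with hy
  set t := x ⬝ᵥ ((Fᵀ * P⁻¹ * F) *ᵥ x) with htdef
  set b := x ⬝ᵥ (P'⁻¹ *ᵥ x) with hbdef
  set a := (Fᵀ *ᵥ y) ⬝ᵥ (P' *ᵥ (Fᵀ *ᵥ y)) with hadef
  have hFx : (Fᵀ * P⁻¹ * F) *ᵥ x = Fᵀ *ᵥ y := by
    rw [hy, mulVec_mulVec, mulVec_mulVec]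
  have ht : t = (F *ᵥ x) ⬝ᵥ y := by
    rw [htdef, hFx, dotProduct_mulVec, ← mulVec_transpose, transpose_transpose]
  have ht0 : 0 ≤ t := by
    rw [ht, hy]
    simpa using hPinv.posSemidef.dotProduct_mulVec_nonneg (F *ᵥ x)
  have hPy : P *ᵥ y = F *ᵥ x := by
    rw [hy, mulVec_mulVec, hPP, one_mulVec]
  have hyPy : y ⬝ᵥ (P *ᵥ y) = t := by
    rw [hPy, ht, dotProduct_comm]
  have hca : c * a ≤ t := by
    have h2 := h.dotProduct_mulVec_nonneg y
    simp only [star_trivial, sub_mulVec, dotProduct_sub, smul_mulVec,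
      dotProduct_smul, smul_eq_mul] at h2
    have : y ⬝ᵥ ((F * P' * Fᵀ) *ᵥ y) = a := by
      rw [hadef, ← mulVec_mulVec, ← mulVec_mulVec, dotProduct_mulVec (v := y),
        ← mulVec_transpose]
    rw [this, hyPy] at h2
    linarith
  have ha0 : 0 ≤ a := by
    have h3 := hP'.posSemidef.dotProduct_mulVec_nonneg (Fᵀ *ᵥ y)
    simp only [star_trivial] at h3
    rw [hadef]; exact h3
  have hb0 : 0 ≤ b := by simpa using hP'inv.posSemidef.dotProduct_mulVec_nonneg x
  have e1 : P' *ᵥ (P'⁻¹ *ᵥ x) = x := by rw [mulVec_mulVec, hP'P', one_mulVec]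
  have hcross : (Fᵀ *ᵥ y) ⬝ᵥ (P' *ᵥ (P'⁻¹ *ᵥ x)) = t := by
    rw [e1, dotProduct_comm, dotProduct_mulVec, vecMul_transpose, ht]
  have hbb : (P'⁻¹ *ᵥ x) ⬝ᵥ (P' *ᵥ (P'⁻¹ *ᵥ x)) = b := by
    rw [e1, dotProduct_comm, hbdef]
  have hcs := weighted_cs hP'.posSemidef (Fᵀ *ᵥ y) (P'⁻¹ *ᵥ x)
  rw [hcross, hbb, ← hadef] at hcs
  -- hcs : t ^ 2 ≤ a * b
  simp only [star_trivial, sub_mulVec, dotProduct_sub, smul_mulVec,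
    dotProduct_smul, smul_eq_mul]
  rw [← htdef, ← hbdef]
  have hinv : (0:ℝ) < c⁻¹ := by positivity
  rcases eq_or_lt_of_le ht0 with h0 | h0
  · rw [← h0, sub_zero]; positivity
  · have hct : c * t ≤ b := by nlinarith
    have : t ≤ c⁻¹ * b := by
      rw [le_inv_mul_iff₀ hc]
      linarith
    linarith

/-- Claim B.1: one-step contraction of the inverse covariance through the
Joseph-form covariance update, with contraction factor `α' = (1 + q̲/(2ā²p̄))⁻¹`. -/
theorem stmt4 (n m : ℕ) (abar pbar qlow : ℝ)
    (habar : 0 < abar) (hpbar : 0 < pbar) (hqlow : 0 < qlow)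
    (P' : Matrix (Fin n) (Fin n) ℝ) (hP' : P'.PosDef)
    (hP'le : (pbar • (1 : Matrix (Fin n) (Fin n) ℝ) - P').PosSemidef)
    (Abar : Matrix (Fin n) (Fin n) ℝ) (hA : opNorm Abar ≤ abar)
    (Q : Matrix (Fin n) (Fin n) ℝ) (hQsym : Q.IsHermitian)
    (hQge : (Q - qlow • (1 : Matrix (Fin n) (Fin n) ℝ)).PosSemidef)
    (R : Matrix (Fin m) (Fin m) ℝ) (hR : R.PosSemidef)
    (L : Matrix (Fin n) (Fin m) ℝ) (C : Matrix (Fin m) (Fin n) ℝ)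
    (P : Matrix (Fin n) (Fin n) ℝ)
    (hP : P = (1 - L * C) * Abar * P' * Abarᵀ * (1 - L * C)ᵀ
        + (1 - L * C) * Q * (1 - L * C)ᵀ + L * R * Lᵀ)
    (hPpd : P.PosDef) :
    (1 + qlow / (2 * abar ^ 2 * pbar))⁻¹ ∈ Set.Ioo (0 : ℝ) 1 ∧
      ((1 + qlow / (2 * abar ^ 2 * pbar))⁻¹ • (P')⁻¹
        - Abarᵀ * (1 - L * C)ᵀ * P⁻¹ * (1 - L * C) * Abar).PosSemidef := by
  have hop : (0:ℝ) ≤ opNorm Abar := norm_nonneg _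
  set d : ℝ := qlow / (2 * abar ^ 2 * pbar) with hd
  have hd0 : 0 < d := by positivity
  constructor
  · constructor
    · positivity
    · rw [inv_lt_one_iff₀]; right; linarith
  set E : Matrix (Fin n) (Fin n) ℝ := 1 - L * C with hE
  set F : Matrix (Fin n) (Fin n) ℝ := E * Abar with hF
  have hmidherm : (Abar * P' * Abarᵀ).IsHermitian := by
    have := (hP'.posSemidef.mul_mul_conjTranspose_same Abar).isHermitian
    rwa [conjTranspose_eq_transpose_of_trivial] at this
  have hmid : (Q - d • (Abar * P' * Abarᵀ)).PosSemidef := by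
    refine Matrix.PosSemidef.of_dotProduct_mulVec_nonneg ?_ ?_
    · have h1 : (d • (Abar * P' * Abarᵀ)).IsHermitian := by
        have hPt : P'ᵀ = P' := by
          rw [← conjTranspose_eq_transpose_of_trivial]; exact hP'.isHermitian
        simp [Matrix.IsHermitian, conjTranspose_smul, hPt, Matrix.mul_assoc]
      exact hQsym.sub h1
    · intro x
      simp only [star_trivial, sub_mulVec, dotProduct_sub, smul_mulVec,
        dotProduct_smul, smul_eq_mul]
      have hq : qlow * (x ⬝ᵥ x) ≤ x ⬝ᵥ (Q *ᵥ x) := by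
        have := hQge.dotProduct_mulVec_nonneg x
        simp only [star_trivial, sub_mulVec, dotProduct_sub, smul_mulVec,
          dotProduct_smul, smul_eq_mul, one_mulVec] at this
        linarith
      have hAx : x ⬝ᵥ ((Abar * P' * Abarᵀ) *ᵥ x)
          = (Abarᵀ *ᵥ x) ⬝ᵥ (P' *ᵥ (Abarᵀ *ᵥ x)) := by
        rw [← mulVec_mulVec, ← mulVec_mulVec, dotProduct_mulVec (v := x),
          ← mulVec_transpose]
      have hP'b : (Abarᵀ *ᵥ x) ⬝ᵥ (P' *ᵥ (Abarᵀ *ᵥ x))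
          ≤ pbar * ((Abarᵀ *ᵥ x) ⬝ᵥ (Abarᵀ *ᵥ x)) := by
        have := hP'le.dotProduct_mulVec_nonneg (Abarᵀ *ᵥ x)
        simp only [star_trivial, sub_mulVec, dotProduct_sub, smul_mulVec,
          dotProduct_smul, smul_eq_mul, one_mulVec] at this
        linarith
      have hAb : (Abarᵀ *ᵥ x) ⬝ᵥ (Abarᵀ *ᵥ x) ≤ abar ^ 2 * (x ⬝ᵥ x) := by
        have h1 := transpose_mulVec_dot_le Abar x
        have h2 : opNorm Abar ^ 2 ≤ abar ^ 2 := by nlinarith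
        have hx := dot_self_nonneg x
        nlinarith
      have hxx := dot_self_nonneg x
      have hAA := dot_self_nonneg (Abarᵀ *ᵥ x)
      have hdk : d * (abar ^ 2 * pbar) = qlow / 2 := by
        rw [hd]; field_simp
      rw [hAx]
      nlinarith [mul_le_mul_of_nonneg_left hP'b hd0.le,
        mul_le_mul_of_nonneg_left hAb (mul_nonneg hd0.le hpbar.le)]
  have key : P - (1 + d) • (F * P' * Fᵀ)
      = E * (Q - d • (Abar * P' * Abarᵀ)) * Eᵀ + L * R * Lᵀ := by
    rw [hP, hF]
    simp only [transpose_mul, Matrix.mul_sub, Matrix.sub_mul, Matrix.mul_smul,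
      Matrix.smul_mul, add_smul, one_smul, Matrix.mul_assoc]
    abel
  have hbig : (P - (1 + d) • (F * P' * Fᵀ)).PosSemidef := by
    rw [key]
    have h1 : (E * (Q - d • (Abar * P' * Abarᵀ)) * Eᵀ).PosSemidef := by
      have := hmid.mul_mul_conjTranspose_same E
      rwa [conjTranspose_eq_transpose_of_trivial] at this
    have h2 : (L * R * Lᵀ).PosSemidef := by
      have := hR.mul_mul_conjTranspose_same L
      rwa [conjTranspose_eq_transpose_of_trivial] at this
    exact h1.add h2
  have hc : (0:ℝ) < 1 + d := by linarith
  have hfin := contraction hc hPpd hP' hbig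
  have heq : Fᵀ * P⁻¹ * F = Abarᵀ * (1 - L * C)ᵀ * P⁻¹ * (1 - L * C) * Abar := by
    rw [hF, hE]
    simp only [transpose_mul, Matrix.mul_assoc]
  rwa [heq] at hfin
end

section
/- Let n ∈ ℕ, ε > 0, t₀ ∈ ℝ, and nonnegative constants d̄, Φ̄, ḡ₁, ḡ₂. Let Φ : ℝ × ℝ → ℝ^{n×n}, G₁, G₂ : ℝ → ℝ^{n×n}, and e₁, e₂ : ℝ → ℝⁿ be functions such that for every t ∈ [t₀, t₀ + ε] the map τ ↦ Φ(t,τ)(G₁(τ) e₁(τ) + G₂(τ) e₂(τ)) is integrable on [t₀, t], and such that for all t₀ ≤ τ ≤ t ≤ t₀ + ε: ‖Φ(t,τ)‖ ≤ Φ̄, ‖G₁(τ)‖ ≤ ḡ₁, ‖G₂(τ)‖ ≤ ḡ₂, ‖e₁(τ)‖ ≤ (τ − t₀) d̄, and ‖e₂(τ)‖ ≤ (t₀ + ε − τ) d̄. Then for every t ∈ [t₀, t₀ + ε], ‖ ∫_{t₀}^{t} Φ(t,τ)(G₁(τ) e₁(τ) + G₂(τ) e₂(τ)) dτ ‖ ≤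 Φ̄ ( ḡ₁/2 + ḡ₂ ) d̄ ε². -/
open Matrix MeasureTheory

lemma mulVec_norm_le {m n : ℕ} (A : Matrix (Fin m) (Fin n) ℝ)
    (x : EuclideanSpace ℝ (Fin n)) :
    ‖Matrix.toEuclideanLin A x‖ ≤ opNorm A * ‖x‖ :=
  (LinearMap.toContinuousLinearMap (Matrix.toEuclideanLin A)).le_opNorm x

/-- Key estimate in Lemma 4: the piecewise-constant approximation error of the state
prediction over one sampling interval of length `ε` is bounded by
`Φ̄(ḡ₁/2 + ḡ₂) d̄ ε²`. -/
theorem stmt9 (n : ℕ) (ε t₀ : ℝ) (hε : 0 < ε)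
    (dbar Φbar g1 g2 : ℝ) (hd : 0 ≤ dbar) (hΦbar : 0 ≤ Φbar)
    (hg1 : 0 ≤ g1) (hg2 : 0 ≤ g2)
    (Φ : ℝ → ℝ → Matrix (Fin n) (Fin n) ℝ)
    (G₁ G₂ : ℝ → Matrix (Fin n) (Fin n) ℝ)
    (e₁ e₂ : ℝ → EuclideanSpace ℝ (Fin n))
    (f : ℝ → ℝ → EuclideanSpace ℝ (Fin n))
    (hf : ∀ t τ, f t τ =
      (Φ t τ).mulVec ((G₁ τ).mulVec (e₁ τ) + (G₂ τ).mulVec (e₂ τ)))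
    (hint : ∀ t ∈ Set.Icc t₀ (t₀ + ε), IntervalIntegrable (f t) volume t₀ t)
    (hbound : ∀ t τ, t₀ ≤ τ → τ ≤ t → t ≤ t₀ + ε →
      opNorm (Φ t τ) ≤ Φbar ∧ opNorm (G₁ τ) ≤ g1 ∧ opNorm (G₂ τ) ≤ g2 ∧
        ‖e₁ τ‖ ≤ (τ - t₀) * dbar ∧ ‖e₂ τ‖ ≤ (t₀ + ε - τ) * dbar) :
    ∀ t ∈ Set.Icc t₀ (t₀ + ε),
      ‖∫ τ in t₀..t, f t τ‖ ≤ Φbar * (g1 / 2 + g2) * dbar * ε ^ 2 := by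
  intro t ht
  obtain ⟨ht₀, htε⟩ := ht
  set b : ℝ → ℝ := fun τ => Φbar * dbar * (g1 * (τ - t₀) + g2 * ε) with hb
  have hbcont : Continuous b := by fun_prop
  have hbint : IntervalIntegrable b volume t₀ t := hbcont.intervalIntegrable _ _
  have hnorm : ∀ᵐ τ ∂(volume.restrict (Set.uIoc t₀ t)), ‖f t τ‖ ≤ b τ := by
    rw [Set.uIoc_of_le ht₀]
    filter_upwards [ae_restrict_mem measurableSet_Ioc] with τ hτ
    obtain ⟨hτ1, hτ2⟩ := hτ
    obtain ⟨h1, h2, h3, h4, h5⟩ := hbound t τ hτ1.le hτ2 htε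
    rw [← WithLp.toLp_ofLp (x := f t τ), hf]
    show ‖Matrix.toEuclideanLin (Φ t τ)
        (Matrix.toEuclideanLin (G₁ τ) (e₁ τ) + Matrix.toEuclideanLin (G₂ τ) (e₂ τ))‖ ≤ b τ
    calc ‖Matrix.toEuclideanLin (Φ t τ)
            (Matrix.toEuclideanLin (G₁ τ) (e₁ τ) + Matrix.toEuclideanLin (G₂ τ) (e₂ τ))‖
        ≤ opNorm (Φ t τ) *
            ‖Matrix.toEuclideanLin (G₁ τ) (e₁ τ) + Matrix.toEuclideanLin (G₂ τ) (e₂ τ)‖ :=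
          mulVec_norm_le _ _
      _ ≤ Φbar * (‖Matrix.toEuclideanLin (G₁ τ) (e₁ τ)‖ +
            ‖Matrix.toEuclideanLin (G₂ τ) (e₂ τ)‖) :=
          mul_le_mul h1 (norm_add_le _ _) (norm_nonneg _) hΦbar
      _ ≤ Φbar * (g1 * ((τ - t₀) * dbar) + g2 * ((t₀ + ε - τ) * dbar)) := by
          gcongr
          · exact le_trans (mulVec_norm_le _ _)
              (mul_le_mul h2 h4 (norm_nonneg _) hg1)
          · exact le_trans (mulVec_norm_le _ _)
              (mul_le_mul h3 h5 (norm_nonneg _) hg2)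
      _ ≤ b τ := by
          show _ ≤ Φbar * dbar * (g1 * (τ - t₀) + g2 * ε)
          nlinarith [mul_nonneg (mul_nonneg (mul_nonneg hΦbar hg2) hd)
            (sub_nonneg.2 hτ1.le)]
  have key := intervalIntegral.norm_integral_le_abs_of_norm_le hnorm hbint
  have hbval : ∫ τ in t₀..t, b τ =
      Φbar * dbar * (g1 * (t - t₀) ^ 2 / 2 + g2 * ε * (t - t₀)) := by
    rw [hb]
    simp only [intervalIntegral.integral_const_mul]
    have : (∫ τ in t₀..t, (g1 * (τ - t₀) + g2 * ε)) =
        g1 * ((t ^ 2 - t₀ ^ 2) / 2 - t₀ * (t - t₀)) + g2 * ε * (t - t₀) := by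
      rw [intervalIntegral.integral_add
        ((by fun_prop : Continuous fun τ : ℝ => g1 * (τ - t₀)).intervalIntegrable _ _)
        intervalIntegrable_const]
      rw [intervalIntegral.integral_const_mul, intervalIntegral.integral_const]
      rw [intervalIntegral.integral_sub
        ((by fun_prop : Continuous fun τ : ℝ => τ).intervalIntegrable _ _)
        intervalIntegrable_const]
      rw [integral_id, intervalIntegral.integral_const]
      simp only [smul_eq_mul]; ring
    rw [this]; ring
  rw [hbval] at key
  have h7 : 0 ≤ t - t₀ := by linarith
  have h8 : t - t₀ ≤ ε := by linarith
  calc ‖∫ τ in t₀..t, f t τ‖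
      ≤ |Φbar * dbar * (g1 * (t - t₀) ^ 2 / 2 + g2 * ε * (t - t₀))| := key
    _ = Φbar * dbar * (g1 * (t - t₀) ^ 2 / 2 + g2 * ε * (t - t₀)) := by
        apply abs_of_nonneg; positivity
    _ ≤ Φbar * (g1 / 2 + g2) * dbar * ε ^ 2 := by
        nlinarith [mul_nonneg (mul_nonneg (mul_nonneg hΦbar hd) hg1)
            (mul_nonneg (by linarith : (0:ℝ) ≤ ε - (t - t₀)) (by linarith : (0:ℝ) ≤ ε + (t - t₀))),
          mul_nonneg (mul_nonneg (mul_nonneg hΦbar hd) hg2)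
            (mul_nonneg hε.le (by linarith : (0:ℝ) ≤ ε - (t - t₀)))]
end
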